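/- Let D be a divisor of nonnegative rank on a tropical curve Γ and P ∈ Γ. Then for every point Q ∈ Γ, f_P(Q) = max{ h(Q) : h ∈ R(D), h(P) = 0 }; that is, f_P is the pointwise maximum of all rational functions in R(D) vanishing at P. -/

import Mathlib

open scoped Classical

/-- A combinatorial model of a metric graph: a finite multigraph with positive
edge lengths. -/
structure GraphModel where
  V : Type
  E : Type
  [fintV : Fintype V]
  [fintE : Fintype E]
  src : E → V
  tgt : E → V
  len : E → ℝ
  len_pos : ∀ e, 0 < len e

attribute [instance] GraphModel.fintV GraphModel.fintE

/-- A (compact, connected) tropical curve: a compact connected metric space `Γ`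
which is the geometric realization of a finite multigraph with positive edge
lengths, equipped with the induced path metric.  Each edge `e` is realized by a
parametrization `edge e : [0, len e] → Γ` joining its endpoints, injective on the
interior, the interiors of distinct edges are disjoint and avoid the vertices,
the edges and vertices cover `Γ`, and the metric is the associated path metric. -/
structure TropicalCurve where
  Γ : Type
  [met : MetricSpace Γ]
  [cpt : CompactSpace Γ]
  [conn : ConnectedSpace Γ]
  G : GraphModel
  vtx : G.V → Γ
  edge : G.E → ℝ → Γ
  vtx_inj : Function.Injective vtx
  edge_src : ∀ e, edge e 0 = vtx (G.src e)
  edge_tgt : ∀ e, edge e (G.len e) = vtx (G.tgt e)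
  edge_inj : ∀ e, Set.InjOn (edge e) (Set.Ioo 0 (G.len e))
  interior_disjoint : ∀ e e' t t', t ∈ Set.Ioo 0 (G.len e) → t' ∈ Set.Ioo 0 (G.len e') →
    edge e t = edge e' t' → e = e' ∧ t = t'
  interior_not_vtx : ∀ e t v, t ∈ Set.Ioo 0 (G.len e) → edge e t ≠ vtx v
  cover : ∀ x : Γ, (∃ v, x = vtx v) ∨ ∃ e t, t ∈ Set.Ioo 0 (G.len e) ∧ x = edge e t
  path_metric : ∀ x y : Γ, dist x y = sInf { d : ℝ | ∃ (n : ℕ) (p : ℕ → Γ) (δ : ℕ → ℝ),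
    p 0 = x ∧ p n = y ∧ (∀ i < n, ∃ (e : G.E) (s t : ℝ), s ∈ Set.Icc 0 (G.len e) ∧
      t ∈ Set.Icc 0 (G.len e) ∧ p i = edge e s ∧ p (i+1) = edge e t ∧ δ i = |s - t|) ∧
    d = ∑ i ∈ Finset.range n, δ i }

attribute [instance] TropicalCurve.met TropicalCurve.cpt TropicalCurve.conn

namespace TropicalCurve

variable (C : TropicalCurve)

/-- A divisor on a tropical curve: a finitely supported function `Γ → ℤ`. -/
abbrev Divisor := C.Γ →₀ ℤ

/-- A divisor is effective if all its coefficients are nonnegative. -/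
def Effective (D : Divisor C) : Prop := ∀ v, 0 ≤ D v

/-- The degree of a divisor: the sum of its coefficients. -/
def deg (D : Divisor C) : ℤ := D.sum fun _ n => n

/-- `f` has (outgoing) slope `m` to the right of the point with parameter `t₀`
on the edge `e`. -/
def HasSlopeR (f : C.Γ → ℝ) (e : C.G.E) (t₀ : ℝ) (m : ℤ) : Prop :=
  ∃ ε > 0, t₀ + ε ≤ C.G.len e ∧ ∀ s ∈ Set.Icc t₀ (t₀ + ε),
    f (C.edge e s) = f (C.edge e t₀) + m * (s - t₀)

/-- `f` has (outgoing) slope `m` to the left of the point with parameter `t₀`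
on the edge `e`. -/
def HasSlopeL (f : C.Γ → ℝ) (e : C.G.E) (t₀ : ℝ) (m : ℤ) : Prop :=
  ∃ ε > 0, 0 ≤ t₀ - ε ∧ ∀ s ∈ Set.Icc (t₀ - ε) t₀,
    f (C.edge e s) = f (C.edge e t₀) + m * (t₀ - s)

/-- The branches (outgoing directions) at a point `x` of a tropical curve.  A
branch is encoded by an edge `e`, a parameter `t` with `edge e t = x`, and a
Boolean : `true` for the rightward direction, `false` for the leftward one. -/
def IsBranchAt (b : C.G.E × ℝ × Bool) (x : C.Γ) : Prop :=
  C.edge b.1 b.2.1 = x ∧ b.2.1 ∈ Set.Icc 0 (C.G.len b.1) ∧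
    (if b.2.2 then b.2.1 < C.G.len b.1 else 0 < b.2.1)

/-- `ord_f(x) = n` : the sum of the outgoing slopes of `f` over all branches
emanating from `x` equals `n`. -/
def HasOrderAt (f : C.Γ → ℝ) (x : C.Γ) (n : ℤ) : Prop :=
  ∃ (S : Finset (C.G.E × ℝ × Bool)) (m : C.G.E × ℝ × Bool → ℤ),
    (∀ b, b ∈ S ↔ C.IsBranchAt b x) ∧
    (∀ b ∈ S, if b.2.2 then C.HasSlopeR f b.1 b.2.1 (m b)
      else C.HasSlopeL f b.1 b.2.1 (m b)) ∧
    n = ∑ b ∈ S, m b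

/-- A rational function on a tropical curve: a continuous function which is
piecewise linear with integer slopes and finitely many linear pieces on every
edge. -/
def IsRational (f : C.Γ → ℝ) : Prop :=
  Continuous f ∧ ∀ e : C.G.E, ∃ (n : ℕ) (t : ℕ → ℝ), 0 < n ∧ t 0 = 0 ∧ t n = C.G.len e ∧
    (∀ i < n, t i < t (i+1)) ∧
    ∀ i < n, ∃ (m : ℤ) (b : ℝ), ∀ s ∈ Set.Icc (t i) (t (i+1)),
      f (C.edge e s) = m * s + b

/-- Two divisors are linearly equivalent if their difference is the divisor of a
rational function: `D - D' = div(f)`. -/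
def LinEquiv (D D' : Divisor C) : Prop :=
  ∃ f : C.Γ → ℝ, C.IsRational f ∧ ∀ x, C.HasOrderAt f x (D x - D' x)

/-- `f ∈ R(D)` : `f` is a rational function with `D + div(f) ≥ 0`. -/
def InR (D : Divisor C) (f : C.Γ → ℝ) : Prop :=
  C.IsRational f ∧ ∃ E : Divisor C, C.Effective E ∧ ∀ x, C.HasOrderAt f x (E x - D x)

/-- The branch `b` at `v` leaves the set `X`: some initial punctured segment
along `b` stays in `Γ ∖ (X ∖ {v})`. -/
def BranchLeaving (X : Set C.Γ) (v : C.Γ) (b : C.G.E × ℝ × Bool) : Prop :=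
  C.IsBranchAt b v ∧
    (if b.2.2 then ∃ ε > 0, b.2.1 + ε ≤ C.G.len b.1 ∧
        ∀ s ∈ Set.Ioc b.2.1 (b.2.1 + ε), C.edge b.1 s ∈ X → C.edge b.1 s = v
      else ∃ ε > 0, 0 ≤ b.2.1 - ε ∧
        ∀ s ∈ Set.Ico (b.2.1 - ε) b.2.1, C.edge b.1 s ∈ X → C.edge b.1 s = v)

/-- `deg_X^out(v)` : the number of edges (branch directions) leaving `X` at `v`,
i.e. the maximal number of internally disjoint segments in `Γ ∖ (X ∖ {v})` with
an end at `v`. -/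
noncomputable def outDeg (X : Set C.Γ) (v : C.Γ) : ℕ :=
  {b | C.BranchLeaving X v b}.ncard

/-- The degree (valence) of a point: the number of branches of `Γ` at `v`. -/
noncomputable def pointDeg (v : C.Γ) : ℕ := C.outDeg {v} v

/-- `D` is `v₀`-reduced: its coefficients away from `v₀` are nonnegative, and
every closed connected subset `X ⊆ Γ` avoiding `v₀` has a non-saturated boundary
point, i.e. some `v ∈ ∂X` with `D(v) < deg_X^out(v)`. -/
def IsReduced (v₀ : C.Γ) (D : Divisor C) : Prop :=
  (∀ v, v ≠ v₀ → 0 ≤ D v) ∧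
  ∀ X : Set C.Γ, IsClosed X → IsConnected X → v₀ ∉ X →
    ∃ v ∈ frontier X, D v < (C.outDeg X v : ℤ)

/-- `D` is linearly equivalent to an effective divisor. -/
def EquivEffective (D : Divisor C) : Prop :=
  ∃ E : Divisor C, C.Effective E ∧ C.LinEquiv D E

/-- The rank of a divisor: the largest `r ≥ -1` such that for every effective
divisor `E` of degree `r`, `D - E` is linearly equivalent to an effective
divisor (`-1` when `D` itself is not equivalent to an effective divisor). -/
noncomputable def rank (D : Divisor C) : ℤ :=
  sSup {r : ℤ | -1 ≤ r ∧ ∀ E : Divisor C, C.Effective E → C.deg E = r →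
    C.EquivEffective (D - E)}

/-- The genus of a tropical curve: its first Betti number, computed from any
model as `#E - #V + 1`. -/
noncomputable def genus : ℤ :=
  (Fintype.card C.G.E : ℤ) - (Fintype.card C.G.V : ℤ) + 1

/-- `D` is very ample: the rational functions in `R(D)` separate the points
of `Γ`. -/
def VeryAmple (D : Divisor C) : Prop :=
  ∀ P Q : C.Γ, P ≠ Q → ∃ f g : C.Γ → ℝ, C.InR D f ∧ C.InR D g ∧ f P - g P ≠ f Q - g Q

/-- `D` is ample: some positive integer multiple of `D` is very ample. -/
def Ample (D : Divisor C) : Prop := ∃ m : ℕ, 0 < m ∧ C.VeryAmple (m • D)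

end TropicalCurve

namespace TropicalCurve

variable {C : TropicalCurve}

/-! ### Arithmetic of slopes and orders -/

lemma slopeR_add {f g : C.Γ → ℝ} {e : C.G.E} {t : ℝ} {m k : ℤ}
    (hf : C.HasSlopeR f e t m) (hg : C.HasSlopeR g e t k) :
    C.HasSlopeR (fun y => f y + g y) e t (m + k) := by
  obtain ⟨ε₁, hε₁, hl₁, h₁⟩ := hf
  obtain ⟨ε₂, hε₂, hl₂, h₂⟩ := hg
  refine ⟨min ε₁ ε₂, lt_min hε₁ hε₂, by
    have := min_le_left ε₁ ε₂; linarith, ?_⟩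
  intro s hs
  have hs₁ : s ∈ Set.Icc t (t + ε₁) :=
    ⟨hs.1, hs.2.trans (by have := min_le_left ε₁ ε₂; linarith)⟩
  have hs₂ : s ∈ Set.Icc t (t + ε₂) :=
    ⟨hs.1, hs.2.trans (by have := min_le_right ε₁ ε₂; linarith)⟩
  have e₁ := h₁ s hs₁
  have e₂ := h₂ s hs₂
  simp only []
  push_cast
  linarith

lemma slopeL_add {f g : C.Γ → ℝ} {e : C.G.E} {t : ℝ} {m k : ℤ}
    (hf : C.HasSlopeL f e t m) (hg : C.HasSlopeL g e t k) :
    C.HasSlopeL (fun y => f y + g y) e t (m + k) := by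
  obtain ⟨ε₁, hε₁, hl₁, h₁⟩ := hf
  obtain ⟨ε₂, hε₂, hl₂, h₂⟩ := hg
  refine ⟨min ε₁ ε₂, lt_min hε₁ hε₂, by
    have := min_le_left ε₁ ε₂; linarith, ?_⟩
  intro s hs
  have hs₁ : s ∈ Set.Icc (t - ε₁) t :=
    ⟨le_trans (by have := min_le_left ε₁ ε₂; linarith) hs.1, hs.2⟩
  have hs₂ : s ∈ Set.Icc (t - ε₂) t :=
    ⟨le_trans (by have := min_le_right ε₁ ε₂; linarith) hs.1, hs.2⟩
  have e₁ := h₁ s hs₁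
  have e₂ := h₂ s hs₂
  simp only []
  push_cast
  linarith

lemma slopeR_neg {f : C.Γ → ℝ} {e : C.G.E} {t : ℝ} {m : ℤ}
    (hf : C.HasSlopeR f e t m) : C.HasSlopeR (fun y => -f y) e t (-m) := by
  obtain ⟨ε, hε, hl, h⟩ := hf
  refine ⟨ε, hε, hl, fun s hs => ?_⟩
  have := h s hs
  simp only []
  push_cast
  linarith

lemma slopeL_neg {f : C.Γ → ℝ} {e : C.G.E} {t : ℝ} {m : ℤ}
    (hf : C.HasSlopeL f e t m) : C.HasSlopeL (fun y => -f y) e t (-m) := by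
  obtain ⟨ε, hε, hl, h⟩ := hf
  refine ⟨ε, hε, hl, fun s hs => ?_⟩
  have := h s hs
  simp only []
  push_cast
  linarith

lemma order_add {f g : C.Γ → ℝ} {x : C.Γ} {n k : ℤ}
    (hf : C.HasOrderAt f x n) (hg : C.HasOrderAt g x k) :
    C.HasOrderAt (fun y => f y + g y) x (n + k) := by
  obtain ⟨S, m, hS, hm, hsum⟩ := hf
  obtain ⟨S', m', hS', hm', hsum'⟩ := hg
  have hSS : S' = S := Finset.ext fun b => (hS' b).trans (hS b).symm
  subst hSS
  refine ⟨S', fun b => m b + m' b, hS, ?_, by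
    rw [hsum, hsum', ← Finset.sum_add_distrib]⟩
  intro b hb
  have h1 := hm b hb
  have h2 := hm' b hb
  by_cases hd : b.2.2
  · simp only [hd, if_true] at h1 h2 ⊢
    exact slopeR_add h1 h2
  · simp only [hd, if_false] at h1 h2 ⊢
    exact slopeL_add h1 h2

lemma order_neg {f : C.Γ → ℝ} {x : C.Γ} {n : ℤ}
    (hf : C.HasOrderAt f x n) : C.HasOrderAt (fun y => -f y) x (-n) := by
  obtain ⟨S, m, hS, hm, hsum⟩ := hf
  refine ⟨S, fun b => -m b, hS, ?_, by rw [hsum, ← Finset.sum_neg_distrib]⟩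
  intro b hb
  have h1 := hm b hb
  by_cases hd : b.2.2
  · simp only [hd, if_true] at h1 ⊢
    exact slopeR_neg h1
  · simp only [hd, if_false] at h1 ⊢
    exact slopeL_neg h1

lemma order_congr {f : C.Γ → ℝ} {x : C.Γ} {n k : ℤ}
    (hf : C.HasOrderAt f x n) (h : n = k) : C.HasOrderAt f x k := h ▸ hf

lemma order_sub {f g : C.Γ → ℝ} {x : C.Γ} {n k : ℤ}
    (hf : C.HasOrderAt f x n) (hg : C.HasOrderAt g x k) :
    C.HasOrderAt (fun y => f y - g y) x (n - k) := by
  have := order_add hf (order_neg hg)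
  simpa [sub_eq_add_neg] using this

/-! ### The edge parametrizations are 1-Lipschitz, hence continuous -/

lemma edge_dist_le (e : C.G.E) {a b : ℝ} (ha : a ∈ Set.Icc 0 (C.G.len e))
    (hb : b ∈ Set.Icc 0 (C.G.len e)) :
    dist (C.edge e a) (C.edge e b) ≤ |a - b| := by
  rw [C.path_metric]
  apply csInf_le
  · refine ⟨0, ?_⟩
    rintro d ⟨n, p, δ, h0, hn, hstep, rfl⟩
    apply Finset.sum_nonneg
    intro i hi
    obtain ⟨e', s', t', _, _, _, _, hδ⟩ := hstep i (Finset.mem_range.mp hi)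
    rw [hδ]; positivity
  · refine ⟨1, fun i => if i = 0 then C.edge e a else C.edge e b,
      fun _ => |a - b|, by simp, by simp, ?_, by simp⟩
    intro i hi
    have hi0 : i = 0 := by omega
    subst hi0
    exact ⟨e, a, b, ha, hb, by simp, by simp, rfl⟩

lemma edge_continuousOn (e : C.G.E) :
    ContinuousOn (C.edge e) (Set.Icc 0 (C.G.len e)) := by
  apply LipschitzOnWith.continuousOn (K := 1)
  rw [lipschitzOnWith_iff_dist_le_mul]
  intro x hx y hy
  have := edge_dist_le e hx hy
  rw [Real.dist_eq]
  simpa using this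

/-! ### Slopes at a global maximum are nonpositive -/

lemma int_nonpos_of_mul {ε : ℝ} {m : ℤ} (hε : 0 < ε) (h : (m : ℝ) * ε ≤ 0) :
    m ≤ 0 := by
  by_contra h'
  push_neg at h'
  have hm : (0 : ℝ) < m := by exact_mod_cast h'
  nlinarith

lemma order_nonpos_of_max {u : C.Γ → ℝ} {x : C.Γ} {n : ℤ}
    (hmax : ∀ y, u y ≤ u x) (hord : C.HasOrderAt u x n) : n ≤ 0 := by
  obtain ⟨S, m, hS, hm, hsum⟩ := hord
  rw [hsum]
  apply Finset.sum_nonpos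
  intro b hb
  obtain ⟨e, t, dir⟩ := b
  obtain ⟨hbe, ⟨ht0, htl⟩, hdir⟩ := (hS _).1 hb
  have hsl := hm _ hb
  cases dir
  · simp only [Bool.false_eq_true, if_false] at hsl hdir ⊢
    obtain ⟨ε, hε, hεl, heq⟩ := hsl
    have h1 := heq (t - ε) ⟨le_refl _, by linarith⟩
    rw [hbe] at h1
    have h2 := hmax (C.edge e (t - ε))
    apply int_nonpos_of_mul hε
    have : (m (e, t, false) : ℝ) * (t - (t - ε)) ≤ 0 := by linarith
    simpa using this
  · simp only [if_true] at hsl hdir ⊢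
    obtain ⟨ε, hε, hεl, heq⟩ := hsl
    have h1 := heq (t + ε) ⟨by linarith, le_refl _⟩
    rw [hbe] at h1
    have h2 := hmax (C.edge e (t + ε))
    apply int_nonpos_of_mul hε
    have : (m (e, t, true) : ℝ) * (t + ε - t) ≤ 0 := by linarith
    simpa using this

/-! ### The maximum principle for reduced divisors -/

lemma maxPrinciple (C : TropicalCurve) (P : C.Γ) (DP : Divisor C)
    (h₁ : C.IsReduced P DP) (E : Divisor C) (hE : C.Effective E)
    (u : C.Γ → ℝ) (hu : Continuous u)
    (hord : ∀ x, C.HasOrderAt u x (E x - DP x)) : ∀ Q, u Q ≤ u P := by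
  obtain ⟨x₀, -, hx₀⟩ := isCompact_univ.exists_isMaxOn
    (Set.univ_nonempty (α := C.Γ)) hu.continuousOn
  have hmax : ∀ y, u y ≤ u x₀ := fun y => hx₀ (Set.mem_univ y)
  by_cases hPX : u P = u x₀
  · exact fun Q => (hmax Q).trans (le_of_eq hPX.symm)
  exfalso
  set X : Set C.Γ := {x | u x = u x₀} with hXdef
  have hXc : IsClosed X := isClosed_eq hu continuous_const
  have hx₀X : x₀ ∈ X := rfl
  set X' : Set C.Γ := connectedComponentIn X x₀ with hX'def
  have hX'X : X' ⊆ X := connectedComponentIn_subset X x₀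
  have hX'cl : IsClosed X' := by
    rw [hX'def, connectedComponentIn_eq_image hx₀X]
    exact ((IsClosed.isClosedEmbedding_subtypeVal hXc).isClosedMap) _
      isClosed_connectedComponent
  have hX'conn : IsConnected X' := isConnected_connectedComponentIn_iff.mpr hx₀X
  have hPX' : P ∉ X' := fun h => hPX (hX'X h)
  obtain ⟨v, hvf, hv⟩ := h₁.2 X' hX'cl hX'conn hPX'
  have hvX' : v ∈ X' := hX'cl.frontier_subset hvf
  have hvmax : u v = u x₀ := hX'X hvX'
  obtain ⟨S, m, hS, hm, hsum⟩ := hord v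
  -- all slopes at v are nonpositive
  have hble : ∀ b ∈ S, m b ≤ 0 := by
    intro b hb
    obtain ⟨e, t, dir⟩ := b
    obtain ⟨hbe, ⟨ht0, htl⟩, hdir⟩ := (hS _).1 hb
    have hsl := hm _ hb
    cases dir
    · simp only [Bool.false_eq_true, if_false] at hsl hdir ⊢
      obtain ⟨ε, hε, hεl, heq⟩ := hsl
      have h1 := heq (t - ε) ⟨le_refl _, by linarith⟩
      rw [hbe] at h1
      have h2 := (hmax (C.edge e (t - ε))).trans (le_of_eq hvmax.symm)
      apply int_nonpos_of_mul hε
      have : (m (e, t, false) : ℝ) * (t - (t - ε)) ≤ 0 := by linarith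
      simpa using this
    · simp only [if_true] at hsl hdir ⊢
      obtain ⟨ε, hε, hεl, heq⟩ := hsl
      have h1 := heq (t + ε) ⟨by linarith, le_refl _⟩
      rw [hbe] at h1
      have h2 := (hmax (C.edge e (t + ε))).trans (le_of_eq hvmax.symm)
      apply int_nonpos_of_mul hε
      have : (m (e, t, true) : ℝ) * (t + ε - t) ≤ 0 := by linarith
      simpa using this
  -- slopes along branches leaving X' are at most -1
  have hleave : ∀ b ∈ S.filter (fun b => C.BranchLeaving X' v b), m b ≤ -1 := by
    intro b hb
    rw [Finset.mem_filter] at hb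
    obtain ⟨hbS, hbl⟩ := hb
    have hb0 : m b ≤ 0 := hble b hbS
    rcases lt_or_eq_of_le hb0 with h | he
    · omega
    exfalso
    obtain ⟨e, t, dir⟩ := b
    obtain ⟨hbe, ⟨ht0, htl⟩, hdir⟩ := hbl.1
    have hsl := hm _ hbS
    have hlv := hbl.2
    cases dir
    · -- left-going branch
      simp only [Bool.false_eq_true, if_false] at hsl hlv hdir
      obtain ⟨ε₂, hε₂, hε₂l, heq⟩ := hsl
      obtain ⟨ε₁, hε₁, hε₁l, hX'prop⟩ := hlv
      set δ := min (min ε₁ ε₂) (t / 2) with hδdef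
      have hδ : 0 < δ := lt_min (lt_min hε₁ hε₂) (by linarith)
      have hδε₁ : δ ≤ ε₁ := le_trans (min_le_left _ _) (min_le_left _ _)
      have hδε₂ : δ ≤ ε₂ := le_trans (min_le_left _ _) (min_le_right _ _)
      have hδt : δ ≤ t / 2 := min_le_right _ _
      set s := t - δ with hsdef
      have hconst : ∀ s' ∈ Set.Icc s t, C.edge e s' ∈ X := by
        intro s' hs'
        have hmem : s' ∈ Set.Icc (t - ε₂) t := ⟨by
          have := hs'.1; rw [hsdef] at this; linarith, hs'.2⟩
        have h2 := heq s' hmem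
        rw [hbe] at h2
        show u (C.edge e s') = u x₀
        rw [h2, he, hvmax]
        push_cast
        ring
      have hKc : ContinuousOn (C.edge e) (Set.Icc s t) := by
        apply (edge_continuousOn e).mono
        intro y hy
        exact ⟨le_trans (by linarith) hy.1, le_trans hy.2 htl⟩
      have hK : IsPreconnected (C.edge e '' Set.Icc s t) :=
        isPreconnected_Icc.image _ hKc
      have hKX : C.edge e '' Set.Icc s t ⊆ X := by
        rintro _ ⟨s', hs', rfl⟩; exact hconst s' hs'
      have hKX' : C.edge e '' Set.Icc s t ⊆ X' := by
        have hXv' : connectedComponentIn X v = X' :=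
          (connectedComponentIn_eq hvX').symm
        rw [← hXv']
        exact hK.subset_connectedComponentIn
          ⟨t, ⟨by linarith, le_refl t⟩, hbe⟩ hKX
      have hsX' : C.edge e s ∈ X' :=
        hKX' ⟨s, ⟨le_refl s, by linarith⟩, rfl⟩
      have hsv : C.edge e s = v := hX'prop s ⟨by linarith, by linarith⟩ hsX'
      have hsI : s ∈ Set.Ioo 0 (C.G.len e) := ⟨by linarith, by linarith⟩
      rcases lt_or_eq_of_le htl with ht | ht
      · have heqv : C.edge e t = C.edge e s := hbe.trans hsv.symm
        have : t = s := C.edge_inj e ⟨hdir, ht⟩ hsI heqv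
        rw [hsdef] at this; linarith
      · apply C.interior_not_vtx e s (C.G.tgt e) hsI
        rw [hsv, ← hbe, ht, C.edge_tgt]
    · -- right-going branch
      simp only [if_true] at hsl hlv hdir
      obtain ⟨ε₂, hε₂, hε₂l, heq⟩ := hsl
      obtain ⟨ε₁, hε₁, hε₁l, hX'prop⟩ := hlv
      set δ := min (min ε₁ ε₂) ((C.G.len e - t) / 2) with hδdef
      have hδ : 0 < δ := lt_min (lt_min hε₁ hε₂) (by linarith)
      have hδε₁ : δ ≤ ε₁ := le_trans (min_le_left _ _) (min_le_left _ _)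
      have hδε₂ : δ ≤ ε₂ := le_trans (min_le_left _ _) (min_le_right _ _)
      have hδt : δ ≤ (C.G.len e - t) / 2 := min_le_right _ _
      set s := t + δ with hsdef
      have hconst : ∀ s' ∈ Set.Icc t s, C.edge e s' ∈ X := by
        intro s' hs'
        have hmem : s' ∈ Set.Icc t (t + ε₂) := ⟨hs'.1, by
          have := hs'.2; rw [hsdef] at this; linarith⟩
        have h2 := heq s' hmem
        rw [hbe] at h2
        show u (C.edge e s') = u x₀
        rw [h2, he, hvmax]
        push_cast
        ring
      have hKc : ContinuousOn (C.edge e) (Set.Icc t s) := by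
        apply (edge_continuousOn e).mono
        intro y hy
        exact ⟨le_trans ht0 hy.1, le_trans hy.2 (by linarith)⟩
      have hK : IsPreconnected (C.edge e '' Set.Icc t s) :=
        isPreconnected_Icc.image _ hKc
      have hKX : C.edge e '' Set.Icc t s ⊆ X := by
        rintro _ ⟨s', hs', rfl⟩; exact hconst s' hs'
      have hKX' : C.edge e '' Set.Icc t s ⊆ X' := by
        have hXv' : connectedComponentIn X v = X' :=
          (connectedComponentIn_eq hvX').symm
        rw [← hXv']
        exact hK.subset_connectedComponentIn
          ⟨t, ⟨le_refl t, by linarith⟩, hbe⟩ hKX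
      have hsX' : C.edge e s ∈ X' :=
        hKX' ⟨s, ⟨by linarith, le_refl s⟩, rfl⟩
      have hsv : C.edge e s = v := hX'prop s ⟨by linarith, by linarith⟩ hsX'
      have hsI : s ∈ Set.Ioo 0 (C.G.len e) := ⟨by linarith, by linarith⟩
      rcases lt_or_eq_of_le ht0 with ht | ht
      · have heqv : C.edge e t = C.edge e s := hbe.trans hsv.symm
        have : t = s := C.edge_inj e ⟨ht, hdir⟩ hsI heqv
        rw [hsdef] at this; linarith
      · apply C.interior_not_vtx e s (C.G.src e) hsI
        rw [hsv, ← hbe, ← ht, C.edge_src]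
  -- count the leaving branches
  have hLset : {b | C.BranchLeaving X' v b} =
      ↑(S.filter (fun b => C.BranchLeaving X' v b)) := by
    ext b
    simp only [Set.mem_setOf_eq, Finset.coe_filter]
    exact ⟨fun h => ⟨(hS b).2 h.1, h⟩, fun h => h.2⟩
  have houtdeg : (C.outDeg X' v : ℤ) =
      ((S.filter (fun b => C.BranchLeaving X' v b)).card : ℤ) := by
    rw [outDeg, hLset, Set.ncard_coe_finset]
  have hsum1 : ∑ b ∈ S.filter (fun b => C.BranchLeaving X' v b), m b ≤
      -((S.filter (fun b => C.BranchLeaving X' v b)).card : ℤ) := by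
    have := Finset.sum_le_card_nsmul
      (S.filter (fun b => C.BranchLeaving X' v b)) m (-1) hleave
    simpa using this
  have hsum2 : ∑ b ∈ S.filter (fun b => ¬ C.BranchLeaving X' v b), m b ≤ 0 :=
    Finset.sum_nonpos fun b hb => hble b (Finset.mem_filter.mp hb).1
  have hsplit := Finset.sum_filter_add_sum_filter_not S
    (fun b => C.BranchLeaving X' v b) m
  have hEv : (0 : ℤ) ≤ E v := hE v
  rw [houtdeg] at hv
  rw [← hsplit] at hsum
  linarith

/-! ### Nonnegative rank gives an equivalent effective divisor -/

lemma deg_nonneg_of_effective {E : Divisor C} (hE : C.Effective E) :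
    0 ≤ C.deg E := Finset.sum_nonneg fun v _ => hE v

lemma equivEffective_of_rank_nonneg (C : TropicalCurve) (D : Divisor C)
    (hD : 0 ≤ C.rank D) (P : C.Γ) : C.EquivEffective D := by
  set T : Set ℤ := {r : ℤ | -1 ≤ r ∧ ∀ E : Divisor C, C.Effective E →
    C.deg E = r → C.EquivEffective (D - E)} with hT
  have hneg : (-1 : ℤ) ∈ T := by
    refine ⟨le_refl _, fun E hE hdeg => absurd hdeg ?_⟩
    have := deg_nonneg_of_effective hE
    omega
  have hr0 : ∃ r ∈ T, 0 ≤ r := by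
    by_cases hb : BddAbove T
    · exact ⟨sSup T, Int.csSup_mem ⟨-1, hneg⟩ hb, hD⟩
    · obtain ⟨r, hrT, hr⟩ := not_bddAbove_iff.mp hb 0
      exact ⟨r, hrT, le_of_lt hr⟩
  obtain ⟨r, hrT, hr⟩ := hr0
  set E' : Divisor C := Finsupp.single P r with hE'
  have hE'eff : C.Effective E' := by
    intro v
    rw [hE', Finsupp.single_apply]
    split <;> simp [hr]
  have hE'deg : C.deg E' = r := by
    rw [hE', deg, Finsupp.sum_single_index]; rfl
  obtain ⟨F, hF, f, hfrat, hford⟩ := hrT.2 E' hE'eff hE'deg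
  refine ⟨F + E', fun v => by
    have h1 := hF v
    have h2 := hE'eff v
    rw [Finsupp.add_apply]
    omega, f, hfrat, fun x => ?_⟩
  have := hford x
  apply order_congr this
  simp [Finsupp.sub_apply, Finsupp.add_apply]
  ring

end TropicalCurve
/-- Let `D` be a divisor of nonnegative rank on a tropical
curve `Γ` and `P ∈ Γ`. Let `f_P` be the unique rational function with
`D + div(f_P) = D_P` and `f_P(P) = 0`. Then for every point `Q ∈ Γ`,
`f_P(Q) = max { h(Q) : h ∈ R(D), h(P) = 0 }`; that is, `f_P` is the pointwise
maximum of all rational functions in `R(D)` vanishing at `P`. -/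
theorem fP_eq_pointwise_max (C : TropicalCurve)
    (D : TropicalCurve.Divisor C) (hD : 0 ≤ C.rank D) (P : C.Γ)
    (DP : TropicalCurve.Divisor C) (h₁ : C.IsReduced P DP) (h₂ : C.LinEquiv DP D)
    (fP : C.Γ → ℝ) (hfP : C.IsRational fP)
    (hdiv : ∀ x : C.Γ, C.HasOrderAt fP x (DP x - D x)) (hP0 : fP P = 0) :
    ∀ Q : C.Γ,
      IsGreatest {r : ℝ | ∃ h : C.Γ → ℝ, C.InR D h ∧ h P = 0 ∧ r = h Q} (fP Q) := by
  obtain ⟨E₀, hE₀, φ, hφrat, hφord⟩ :=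
    TropicalCurve.equivEffective_of_rank_nonneg C D hD P
  have hDPP : (0 : ℤ) ≤ DP P := by
    have hucont : Continuous (fun y => -(fP y + φ y)) := (hfP.1.add hφrat.1).neg
    have hordu : ∀ x, C.HasOrderAt (fun y => -(fP y + φ y)) x (E₀ x - DP x) := by
      intro x
      have := TropicalCurve.order_neg
        (TropicalCurve.order_add (hdiv x) (hφord x))
      exact TropicalCurve.order_congr this (by ring)
    have hmaxP := TropicalCurve.maxPrinciple C P DP h₁ E₀ hE₀ _ hucont hordu
    have h1 := TropicalCurve.order_nonpos_of_max hmaxP (hordu P)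
    have h2 := hE₀ P
    omega
  have hDPeff : C.Effective DP := by
    intro v
    by_cases hvP : v = P
    · rw [hvP]; exact hDPP
    · exact h₁.1 v hvP
  intro Q
  constructor
  · exact ⟨fP, ⟨hfP, DP, hDPeff, hdiv⟩, hP0, rfl⟩
  · rintro r ⟨h, ⟨hhrat, Eh, hEh, hordh⟩, hhP, rfl⟩
    have hord_u : ∀ x, C.HasOrderAt (fun y => h y - fP y) x (Eh x - DP x) :=
      fun x => TropicalCurve.order_congr
        (TropicalCurve.order_sub (hordh x) (hdiv x)) (by ring)
    have hmp := TropicalCurve.maxPrinciple C P DP h₁ Eh hEh _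
      (hhrat.1.sub hfP.1) hord_u Q
    have h2 : h Q - fP Q ≤ h P - fP P := hmp
    rw [hhP, hP0] at h2
    linarith
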